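/- Let f : ℝ → ℝ be real analytic with f(0) = 0, and let X : ℝ → ℝ be real analytic with X(0) = 0, such that f'(x)·X(x) ≥ δ(x)(X(x)² + f'(x)²) for some continuous δ > 0 on a neighborhood of 0. Then there exists a continuous function g > 0 on a (possibly smaller) neighborhood of 0 with f'(x) = g(x)·X(x). -/

import Mathlib

open Filter Topology

private lemma aux_no_gap (a b δ : ℝ → ℝ) (k : ℕ) (hk : 0 < k)
    (ha : ContinuousAt a 0) (hb : ContinuousAt b 0) (hδ : ContinuousAt δ 0)
    (hb0 : b 0 ≠ 0) (hδ0 : 0 < δ 0)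
    (h : ∀ᶠ x in 𝓝[≠] (0:ℝ), δ x * |b x| ≤ |x| ^ k * |a x|) : False := by
  have h1 : Tendsto (fun x : ℝ => δ x * |b x|) (𝓝[≠] (0:ℝ)) (𝓝 (δ 0 * |b 0|)) :=
    ((hδ.mul hb.abs).tendsto).mono_left nhdsWithin_le_nhds
  have h2 : Tendsto (fun x : ℝ => |x| ^ k * |a x|) (𝓝[≠] (0:ℝ)) (𝓝 0) := by
    have : Tendsto (fun x : ℝ => |x| ^ k * |a x|) (𝓝 (0:ℝ)) (𝓝 (|(0:ℝ)| ^ k * |a 0|)) :=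
      ((continuous_abs.pow k).continuousAt.mul ha.abs)
    simpa [zero_pow hk.ne'] using this.mono_left nhdsWithin_le_nhds
  have := le_of_tendsto_of_tendsto h1 h2 h
  nlinarith [abs_pos.mpr hb0]

theorem analytic_dim1_Lyapunov_implies_gradlike
    (f X : ℝ → ℝ) (hf : ∀ x : ℝ, AnalyticAt ℝ f x) (hX : ∀ x : ℝ, AnalyticAt ℝ X x)
    (hf0 : f 0 = 0) (hX0 : X 0 = 0)
    (U : Set ℝ) (hU : U ∈ nhds (0 : ℝ)) (δ : ℝ → ℝ)
    (hδc : ContinuousOn δ U) (hδpos : ∀ x ∈ U, 0 < δ x)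
    (hLyap : ∀ x ∈ U, deriv f x * X x ≥ δ x * ((X x) ^ 2 + (deriv f x) ^ 2)) :
    ∃ V ∈ nhds (0 : ℝ), ∃ g : ℝ → ℝ, ContinuousOn g V ∧ (∀ x ∈ V, 0 < g x) ∧
      ∀ x ∈ V, deriv f x = g x * X x := by
  have hFa : AnalyticAt ℝ (deriv f) 0 := by
    have : AnalyticOnNhd ℝ f Set.univ := fun x _ => hf x
    exact this.deriv 0 (Set.mem_univ 0)
  have hXa : AnalyticAt ℝ X 0 := hX 0
  have hδ0 : 0 < δ 0 := hδpos 0 (mem_of_mem_nhds hU)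
  have hδct : ContinuousAt δ 0 := hδc.continuousAt hU
  have hUev : ∀ᶠ z in 𝓝 (0:ℝ), z ∈ U := hU
  -- On U, the zeros of X and deriv f coincide
  have hF0 : ∀ x ∈ U, X x = 0 → deriv f x = 0 := by
    intro x hx h0
    have h1 := hLyap x hx
    have h2 := hδpos x hx
    rw [h0] at h1
    have h4 : δ x * deriv f x ^ 2 ≤ 0 := by linarith
    have h3 : deriv f x ^ 2 = 0 :=
      le_antisymm ((mul_le_mul_iff_right₀ h2).mp (h4.trans_eq (mul_zero (δ x)).symm)) (sq_nonneg _)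
    exact pow_eq_zero_iff two_ne_zero |>.mp h3
  have hX0' : ∀ x ∈ U, deriv f x = 0 → X x = 0 := by
    intro x hx h0
    have h1 := hLyap x hx
    have h2 := hδpos x hx
    rw [h0] at h1
    have h4 : δ x * X x ^ 2 ≤ 0 := by linarith
    have h3 : X x ^ 2 = 0 :=
      le_antisymm ((mul_le_mul_iff_right₀ h2).mp (h4.trans_eq (mul_zero (δ x)).symm)) (sq_nonneg _)
    exact pow_eq_zero_iff two_ne_zero |>.mp h3
  -- comparability inequalities on U
  have key1 : ∀ x ∈ U, δ x * |deriv f x| ≤ |X x| := by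
    intro x hx
    rcases eq_or_ne (deriv f x) 0 with h0 | h0
    · simp [h0, abs_nonneg]
    · have h1 := hLyap x hx
      have h2 := hδpos x hx
      have h3 : deriv f x * X x ≤ |deriv f x| * |X x| := by
        rw [← abs_mul]; exact le_abs_self _
      have h4 : 0 < |deriv f x| := abs_pos.mpr h0
      nlinarith [sq_abs (deriv f x), sq_abs (X x)]
  have key2 : ∀ x ∈ U, δ x * |X x| ≤ |deriv f x| := by
    intro x hx
    rcases eq_or_ne (X x) 0 with h0 | h0
    · simp [h0, abs_nonneg]
    · have h1 := hLyap x hx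
      have h2 := hδpos x hx
      have h3 : deriv f x * X x ≤ |deriv f x| * |X x| := by
        rw [← abs_mul]; exact le_abs_self _
      have h4 : 0 < |X x| := abs_pos.mpr h0
      nlinarith [sq_abs (deriv f x), sq_abs (X x)]
  by_cases hXtop : analyticOrderAt X 0 = ⊤
  · -- X vanishes identically near 0
    rw [analyticOrderAt_eq_top] at hXtop
    obtain ⟨W, hWsub, hWopen, hW0⟩ := eventually_nhds_iff.mp hXtop
    refine ⟨U ∩ W, Filter.inter_mem hU (hWopen.mem_nhds hW0), fun _ => 1,
      continuousOn_const, fun x _ => one_pos, ?_⟩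
    rintro x ⟨hxU, hxW⟩
    rw [hWsub x hxW, mul_zero]
    exact hF0 x hxU (hWsub x hxW)
  by_cases hFtop : analyticOrderAt (deriv f) 0 = ⊤
  · -- deriv f vanishes identically near 0
    rw [analyticOrderAt_eq_top] at hFtop
    obtain ⟨W, hWsub, hWopen, hW0⟩ := eventually_nhds_iff.mp hFtop
    refine ⟨U ∩ W, Filter.inter_mem hU (hWopen.mem_nhds hW0), fun _ => 1,
      continuousOn_const, fun x _ => one_pos, ?_⟩
    rintro x ⟨hxU, hxW⟩
    rw [hWsub x hxW, one_mul, eq_comm]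
    exact hX0' x hxU (hWsub x hxW)
  -- finite orders: extract factorizations
  obtain ⟨n, hn⟩ := WithTop.ne_top_iff_exists.mp hXtop
  obtain ⟨m, hm⟩ := WithTop.ne_top_iff_exists.mp hFtop
  obtain ⟨b, hban, hb0, hbev⟩ := (hXa.analyticOrderAt_eq_natCast (n := n)).mp hn.symm
  obtain ⟨a, haan, ha0, haev⟩ := (hFa.analyticOrderAt_eq_natCast (n := m)).mp hm.symm
  have hbev' : ∀ᶠ z in 𝓝 (0:ℝ), X z = z ^ n * b z := by
    filter_upwards [hbev] with z hz; simpa using hz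
  have haev' : ∀ᶠ z in 𝓝 (0:ℝ), deriv f z = z ^ m * a z := by
    filter_upwards [haev] with z hz; simpa using hz
  have hact : ContinuousAt a 0 := haan.continuousAt
  have hbct : ContinuousAt b 0 := hban.continuousAt
  -- the orders agree
  have hmn : m = n := by
    by_contra hne
    rcases lt_or_gt_of_ne hne with hlt | hlt
    · -- m < n : use δ|deriv f| ≤ |X|
      refine aux_no_gap b a δ (n - m) (by omega) hbct hact hδct ha0 hδ0 ?_
      filter_upwards [haev'.filter_mono nhdsWithin_le_nhds,
        hbev'.filter_mono nhdsWithin_le_nhds,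
        hUev.filter_mono nhdsWithin_le_nhds,
        eventually_mem_nhdsWithin] with x hfx hXx hxU (hx0 : x ∈ ({0}ᶜ : Set ℝ))
      have hxne : x ≠ 0 := hx0
      have hk := key1 x hxU
      rw [hfx, hXx, abs_mul, abs_mul, abs_pow, abs_pow] at hk
      have hxpos : (0:ℝ) < |x| ^ m := pow_pos (abs_pos.mpr hxne) m
      have hsplit : |x| ^ n = |x| ^ m * |x| ^ (n - m) := by
        rw [← pow_add]; congr 1; omega
      rw [hsplit] at hk
      refine (mul_le_mul_iff_right₀ hxpos).mp ?_
      ring_nf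
      ring_nf at hk
      linarith
    · -- n < m : use δ|X| ≤ |deriv f|
      refine aux_no_gap a b δ (m - n) (by omega) hact hbct hδct hb0 hδ0 ?_
      filter_upwards [haev'.filter_mono nhdsWithin_le_nhds,
        hbev'.filter_mono nhdsWithin_le_nhds,
        hUev.filter_mono nhdsWithin_le_nhds,
        eventually_mem_nhdsWithin] with x hfx hXx hxU (hx0 : x ∈ ({0}ᶜ : Set ℝ))
      have hxne : x ≠ 0 := hx0
      have hk := key2 x hxU
      rw [hfx, hXx, abs_mul, abs_mul, abs_pow, abs_pow] at hk
      have hxpos : (0:ℝ) < |x| ^ n := pow_pos (abs_pos.mpr hxne) n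
      have hsplit : |x| ^ m = |x| ^ n * |x| ^ (m - n) := by
        rw [← pow_add]; congr 1; omega
      rw [hsplit] at hk
      refine (mul_le_mul_iff_right₀ hxpos).mp ?_
      ring_nf
      ring_nf at hk
      linarith
  subst hmn
  -- the quotient g = a / b is continuous, positive, and works
  have hg0pos : 0 < a 0 / b 0 := by
    have hev : ∀ᶠ x in 𝓝[≠] (0:ℝ), δ x ≤ a x / b x := by
      filter_upwards [haev'.filter_mono nhdsWithin_le_nhds,
        hbev'.filter_mono nhdsWithin_le_nhds,
        hUev.filter_mono nhdsWithin_le_nhds,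
        (hbct.eventually_ne hb0).filter_mono nhdsWithin_le_nhds,
        eventually_mem_nhdsWithin] with x hfx hXx hxU hbx (hx0 : x ∈ ({0}ᶜ : Set ℝ))
      have hxne : x ≠ 0 := hx0
      have hXne : X x ≠ 0 := by
        rw [hXx]; exact mul_ne_zero (pow_ne_zero m hxne) hbx
      have hXsq : 0 < X x ^ 2 := by positivity
      have h1 := hLyap x hxU
      have h2 := hδpos x hxU
      have hquot : a x / b x = deriv f x / X x := by
        rw [hfx, hXx, mul_comm (x ^ m) (a x), mul_comm (x ^ m) (b x),
          mul_div_mul_right _ _ (pow_ne_zero m hxne)]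
      rw [hquot]
      rw [show deriv f x / X x = deriv f x * X x / X x ^ 2 by
        field_simp]
      rw [le_div_iff₀ hXsq]
      nlinarith [sq_nonneg (deriv f x)]
    have h1 : Tendsto δ (𝓝[≠] (0:ℝ)) (𝓝 (δ 0)) := hδct.tendsto.mono_left nhdsWithin_le_nhds
    have h2 : Tendsto (fun x : ℝ => a x / b x) (𝓝[≠] (0:ℝ)) (𝓝 (a 0 / b 0)) :=
      (hact.div hbct hb0).tendsto.mono_left nhdsWithin_le_nhds
    have := le_of_tendsto_of_tendsto h1 h2 hev
    linarith
  have hgct : ContinuousAt (fun x => a x / b x) 0 := hact.div hbct hb0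
  have e7 : ∀ᶠ z in 𝓝 (0:ℝ), 0 < a z / b z := hgct.tendsto.eventually (eventually_gt_nhds hg0pos)
  have big : ∀ᶠ z in 𝓝 (0:ℝ), X z = z ^ m * b z ∧ deriv f z = z ^ m * a z ∧
      AnalyticAt ℝ a z ∧ AnalyticAt ℝ b z ∧ b z ≠ 0 ∧ 0 < a z / b z := by
    filter_upwards [hbev', haev', haan.eventually_analyticAt, hban.eventually_analyticAt,
      hbct.eventually_ne hb0, e7] with z h1 h2 h3 h4 h5 h6
    exact ⟨h1, h2, h3, h4, h5, h6⟩
  obtain ⟨V, hVsub, hVopen, hV0⟩ := eventually_nhds_iff.mp big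
  refine ⟨V, hVopen.mem_nhds hV0, fun x => a x / b x, ?_, ?_, ?_⟩
  · intro x hx
    exact ((hVsub x hx).2.2.1.continuousAt.div (hVsub x hx).2.2.2.1.continuousAt
      (hVsub x hx).2.2.2.2.1).continuousWithinAt
  · intro x hx
    exact (hVsub x hx).2.2.2.2.2
  · intro x hx
    obtain ⟨hXx, hfx, -, -, hbx, -⟩ := hVsub x hx
    rw [hfx, hXx]
    field_simp
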